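/- Let φ ∈ BW_n and ψ ∈ BW_m be proportionally minimal vectors on the Barnes Wall lattices. Then φ ⊗ ψ is proportionally minimal in BW_{n+m}; consequently the Barnes Wall norm is multiplicative: N(φ⊗ψ) = N(φ)·N(ψ) whenever both are finite. -/

import Mathlib

/-- Generator `|x̃⟩` of the Barnes Wall lattice: the tensor product of `|0⟩`
(where `x i = false`) and `(1/(1+i))(|0⟩+|1⟩)` (where `x i = true`). -/
noncomputable def bwGen (n : ℕ) (x : Fin n → Bool) :
    EuclideanSpace ℂ (Fin n → Fin 2) :=
  WithLp.toLp 2 (fun y => ∏ i : Fin n,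
    (if x i then (1 + Complex.I)⁻¹ else if y i = 0 then 1 else 0))

/-- Membership in the Barnes Wall lattice `BW_n`: the `ℤ[i]`-span of the `bwGen n x`. -/
def memBW (n : ℕ) (v : EuclideanSpace ℂ (Fin n → Fin 2)) : Prop :=
  ∃ a : (Fin n → Bool) → GaussianInt,
    v = ∑ x : Fin n → Bool, (GaussianInt.toComplex (a x)) • bwGen n x

/-- A vector of `BW_n` is proportionally minimal if no strictly shorter
nonzero multiple of it lies on the lattice. -/
def PropMinimal (n : ℕ) (φ : EuclideanSpace ℂ (Fin n → Fin 2)) : Prop :=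
  memBW n φ ∧ ∀ c : ℂ, c ≠ 0 → ‖c‖ < 1 → ¬ memBW n (c • φ)

/-- The Barnes Wall norm `N(φ)`. -/
noncomputable def bwNorm (n : ℕ) (φ : EuclideanSpace ℂ (Fin n → Fin 2)) : ℝ :=
  sInf {r : ℝ | ∃ c : ℂ, c ≠ 0 ∧ memBW n (c • φ) ∧ r = ‖c • φ‖ ^ 2}

/-- Tensor product of vectors in `ℂ^{2^n}` and `ℂ^{2^m}`. -/
noncomputable def bwTprod {n m : ℕ} (φ : EuclideanSpace ℂ (Fin n → Fin 2))
    (ψ : EuclideanSpace ℂ (Fin m → Fin 2)) :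
    EuclideanSpace ℂ (Fin (n + m) → Fin 2) :=
  WithLp.toLp 2 (fun z => φ (fun i => z (Fin.castAdd m i)) * ψ (fun j => z (Fin.natAdd n j)))

/-! ### Auxiliary developments -/

noncomputable def dC (b : Bool) (t : Fin 2) : ℂ :=
  if b then (if t = 0 then 0 else 1 + Complex.I) else (if t = 0 then 1 else -1)

/-- The dual functional extracting the coefficient of `bwGen n x`. -/
noncomputable def dualL (n : ℕ) (x : Fin n → Bool) :
    EuclideanSpace ℂ (Fin n → Fin 2) →ₗ[ℂ] ℂ :=
  ∑ y : Fin n → Fin 2, (∏ i, dC (x i) (y i)) • PiLp.projₗ 2 (fun _ : Fin n → Fin 2 => ℂ) y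

lemma dualL_apply (n : ℕ) (x : Fin n → Bool) (v : EuclideanSpace ℂ (Fin n → Fin 2)) :
    dualL n x v = ∑ y : Fin n → Fin 2, (∏ i, dC (x i) (y i)) * v y := by
  simp [dualL, PiLp.projₗ, smul_eq_mul]

lemma onePlusI_ne : (1 + Complex.I) ≠ 0 := by
  intro h
  have := congrArg Complex.re h
  simp at this

lemma dC_gen_sum (b b' : Bool) :
    (∑ t : Fin 2, dC b t * (if b' then (1 + Complex.I)⁻¹ else if t = 0 then 1 else 0)) =
      if b = b' then 1 else 0 := by
  cases b <;> cases b' <;>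
    simp [dC, Fin.sum_univ_two, mul_inv_cancel₀ onePlusI_ne]

lemma dualL_gen (n : ℕ) (x x' : Fin n → Bool) :
    dualL n x (bwGen n x') = if x' = x then 1 else 0 := by
  rw [dualL_apply]
  have hg : ∀ y : Fin n → Fin 2, bwGen n x' y =
      ∏ i, (if x' i then (1 + Complex.I)⁻¹ else if y i = 0 then 1 else 0) := fun y => rfl
  calc (∑ y : Fin n → Fin 2, (∏ i, dC (x i) (y i)) * bwGen n x' y)
      = ∑ y : Fin n → Fin 2, ∏ i,
          (dC (x i) (y i) * (if x' i then (1 + Complex.I)⁻¹ else if y i = 0 then 1 else 0)) := by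
        refine Finset.sum_congr rfl fun y _ => ?_
        rw [hg y, Finset.prod_mul_distrib]
    _ = ∏ i, ∑ t : Fin 2,
          (dC (x i) t * (if x' i then (1 + Complex.I)⁻¹ else if t = 0 then 1 else 0)) := by
        rw [Fintype.prod_sum]
    _ = ∏ i, (if x i = x' i then (1:ℂ) else 0) := by
        exact Finset.prod_congr rfl fun i _ => dC_gen_sum (x i) (x' i)
    _ = if x' = x then 1 else 0 := by
        by_cases h : x' = x
        · subst h; simp
        · rw [if_neg h]
          obtain ⟨i, hi⟩ := Function.ne_iff.mp h
          exact Finset.prod_eq_zero (Finset.mem_univ i) (by simp [Ne.symm hi])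

lemma dualL_sum_gen (n : ℕ) (g : (Fin n → Bool) → ℂ) (x : Fin n → Bool) :
    dualL n x (∑ x' : Fin n → Bool, g x' • bwGen n x') = g x := by
  rw [map_sum]
  simp_rw [map_smul, dualL_gen, smul_eq_mul, mul_ite, mul_one, mul_zero]
  simp

def pairEquiv (n m : ℕ) (α : Type*) : ((Fin n → α) × (Fin m → α)) ≃ (Fin (n + m) → α) where
  toFun p := Fin.append p.1 p.2
  invFun z := (fun i => z (Fin.castAdd m i), fun j => z (Fin.natAdd n j))
  left_inv p := by
    ext i
    · simp [Fin.append_left]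
    · simp [Fin.append_right]
  right_inv z := by
    funext k
    refine Fin.addCases (fun i => ?_) (fun j => ?_) k
    · simp [Fin.append_left]
    · simp [Fin.append_right]

lemma tprod_append {n m : ℕ} (φ : EuclideanSpace ℂ (Fin n → Fin 2))
    (ψ : EuclideanSpace ℂ (Fin m → Fin 2)) (u : Fin n → Fin 2) (v : Fin m → Fin 2) :
    bwTprod φ ψ (Fin.append u v) = φ u * ψ v := by
  have h1 : (fun i => Fin.append u v (Fin.castAdd m i)) = u := by
    funext i; exact Fin.append_left u v i
  have h2 : (fun j => Fin.append u v (Fin.natAdd n j)) = v := by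
    funext j; exact Fin.append_right u v j
  show φ (fun i => Fin.append u v (Fin.castAdd m i)) * ψ (fun j => Fin.append u v (Fin.natAdd n j)) = _
  rw [h1, h2]

lemma prod_append_split {n m : ℕ} (F : Fin (n + m) → ℂ) :
    (∏ k : Fin (n + m), F k) =
      (∏ i : Fin n, F (Fin.castAdd m i)) * ∏ j : Fin m, F (Fin.natAdd n j) :=
  Fin.prod_univ_add F

lemma dualL_tprod {n m : ℕ} (x : Fin n → Bool) (y : Fin m → Bool)
    (φ : EuclideanSpace ℂ (Fin n → Fin 2)) (ψ : EuclideanSpace ℂ (Fin m → Fin 2)) :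
    dualL (n + m) (Fin.append x y) (bwTprod φ ψ) = dualL n x φ * dualL m y ψ := by
  rw [dualL_apply, dualL_apply, dualL_apply]
  rw [← Equiv.sum_comp (pairEquiv n m (Fin 2))
      (fun z => (∏ k, dC (Fin.append x y k) (z k)) * bwTprod φ ψ z)]
  rw [Finset.sum_mul_sum, Fintype.sum_prod_type]
  refine Finset.sum_congr rfl fun u _ => Finset.sum_congr rfl fun v _ => ?_
  have he : pairEquiv n m (Fin 2) (u, v) = Fin.append u v := rfl
  rw [he, tprod_append]
  have hp : (∏ k, dC (Fin.append x y k) (Fin.append u v k)) =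
      (∏ i, dC (x i) (u i)) * ∏ j, dC (y j) (v j) := by
    rw [prod_append_split]
    congr 1
    · exact Finset.prod_congr rfl fun i _ => by rw [Fin.append_left, Fin.append_left]
    · exact Finset.prod_congr rfl fun j _ => by rw [Fin.append_right, Fin.append_right]
  rw [hp]; ring

lemma sum_apply' {ι J : Type*} [Fintype J] (s : Finset ι) (f : ι → EuclideanSpace ℂ J) (j : J) :
    (∑ i ∈ s, f i) j = ∑ i ∈ s, f i j := by
  have := map_sum (PiLp.projₗ (𝕜 := ℂ) 2 (fun _ : J => ℂ) j) f s
  exact this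

lemma bwGen_append {n m : ℕ} (x : Fin n → Bool) (y : Fin m → Bool) (w : Fin (n + m) → Fin 2) :
    bwGen (n + m) (Fin.append x y) w =
      bwGen n x (fun i => w (Fin.castAdd m i)) * bwGen m y (fun j => w (Fin.natAdd n j)) := by
  show (∏ k : Fin (n + m), (if Fin.append x y k then (1 + Complex.I)⁻¹
      else if w k = 0 then 1 else 0)) = _
  rw [prod_append_split]
  congr 1
  · exact Finset.prod_congr rfl fun i _ => by rw [Fin.append_left]
  · exact Finset.prod_congr rfl fun j _ => by rw [Fin.append_right]

lemma memBW_tprod {n m : ℕ} {φ : EuclideanSpace ℂ (Fin n → Fin 2)}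
    {ψ : EuclideanSpace ℂ (Fin m → Fin 2)} (hφ : memBW n φ) (hψ : memBW m ψ) :
    memBW (n + m) (bwTprod φ ψ) := by
  obtain ⟨a, ha⟩ := hφ
  obtain ⟨b, hb⟩ := hψ
  refine ⟨fun z => a (fun i => z (Fin.castAdd m i)) * b (fun j => z (Fin.natAdd n j)), ?_⟩
  refine PiLp.ext fun w => ?_
  have hw : (∑ z : Fin (n + m) → Bool, (GaussianInt.toComplex
        (a (fun i => z (Fin.castAdd m i)) * b (fun j => z (Fin.natAdd n j)))) •
        bwGen (n + m) z) w
      = ∑ z : Fin (n + m) → Bool, (GaussianInt.toComplex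
        (a (fun i => z (Fin.castAdd m i)) * b (fun j => z (Fin.natAdd n j)))) *
        bwGen (n + m) z w := by
    rw [sum_apply']; rfl
  rw [hw, ← Equiv.sum_comp (pairEquiv n m Bool)]
  have hφw : φ (fun i => w (Fin.castAdd m i)) =
      ∑ x : Fin n → Bool, GaussianInt.toComplex (a x) * bwGen n x (fun i => w (Fin.castAdd m i)) := by
    rw [ha, sum_apply']; rfl
  have hψw : ψ (fun j => w (Fin.natAdd n j)) =
      ∑ y : Fin m → Bool, GaussianInt.toComplex (b y) * bwGen m y (fun j => w (Fin.natAdd n j)) := by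
    rw [hb, sum_apply']; rfl
  have hT : bwTprod φ ψ w = φ (fun i => w (Fin.castAdd m i)) * ψ (fun j => w (Fin.natAdd n j)) := rfl
  rw [hT, hφw, hψw, Finset.sum_mul_sum, Fintype.sum_prod_type]
  refine Finset.sum_congr rfl fun x _ => Finset.sum_congr rfl fun y _ => ?_
  rw [show (pairEquiv n m Bool) (x, y) = Fin.append x y from rfl]
  have h1 : (fun i => Fin.append x y (Fin.castAdd m i)) = x := by
    funext i; exact Fin.append_left x y i
  have h2 : (fun j => Fin.append x y (Fin.natAdd n j)) = y := by
    funext j; exact Fin.append_right x y j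
  rw [h1, h2, bwGen_append, map_mul]
  ring

lemma one_le_norm_toComplex {g : GaussianInt} (hg : g ≠ 0) : 1 ≤ ‖GaussianInt.toComplex g‖ := by
  have h1 : (1:ℤ) ≤ g.norm := GaussianInt.norm_pos.mpr hg
  have h2 : (g.norm : ℝ) = Complex.normSq (GaussianInt.toComplex g) :=
    GaussianInt.intCast_real_norm g
  have h3 : (1:ℝ) ≤ Complex.normSq (GaussianInt.toComplex g) := by
    rw [← h2]; exact_mod_cast h1
  have h4 : Complex.normSq (GaussianInt.toComplex g) = ‖GaussianInt.toComplex g‖^2 := by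
    rw [Complex.normSq_eq_norm_sq]
  nlinarith [norm_nonneg (GaussianInt.toComplex g)]

lemma one_lt_norm_toComplex {g : GaussianInt} (hg : g ≠ 0) (hu : ¬ IsUnit g) :
    1 < ‖GaussianInt.toComplex g‖ := by
  have h1 : (0:ℤ) < g.norm := GaussianInt.norm_pos.mpr hg
  have hne : g.norm ≠ 1 := by
    intro h
    exact hu (Zsqrtd.norm_eq_one_iff.mp (by simp [h]))
  have h2 : (2:ℤ) ≤ g.norm := by omega
  have h3 : (g.norm : ℝ) = Complex.normSq (GaussianInt.toComplex g) :=
    GaussianInt.intCast_real_norm g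
  have h4 : (2:ℝ) ≤ Complex.normSq (GaussianInt.toComplex g) := by
    rw [← h3]; exact_mod_cast h2
  have h5 : Complex.normSq (GaussianInt.toComplex g) = ‖GaussianInt.toComplex g‖^2 := by
    rw [Complex.normSq_eq_norm_sq]
  nlinarith [norm_nonneg (GaussianInt.toComplex g)]

lemma exists_coeff_ne_zero {n : ℕ} {φ : EuclideanSpace ℂ (Fin n → Fin 2)}
    (h : PropMinimal n φ) {a : (Fin n → Bool) → GaussianInt}
    (ha : φ = ∑ x : Fin n → Bool, (GaussianInt.toComplex (a x)) • bwGen n x) :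
    ∃ x, a x ≠ 0 := by
  by_contra h'
  push_neg at h'
  have hz : φ = 0 := by
    rw [ha]
    refine Finset.sum_eq_zero fun x _ => ?_
    rw [h' x]; simp
  refine h.2 (2⁻¹ : ℂ) (by norm_num) ?_ ?_
  · rw [norm_inv]
    have : ‖(2:ℂ)‖ = 2 := by
      simpa using Complex.abs_ofNat 2
    rw [this]; norm_num
  · rw [hz, smul_zero]
    exact ⟨0, by simp⟩

lemma no_common_prime {n : ℕ} {φ : EuclideanSpace ℂ (Fin n → Fin 2)}
    (h : PropMinimal n φ) {a : (Fin n → Bool) → GaussianInt}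
    (ha : φ = ∑ x : Fin n → Bool, (GaussianInt.toComplex (a x)) • bwGen n x)
    {p : GaussianInt} (hp : Prime p) : ∃ x, ¬ p ∣ a x := by
  by_contra h'
  push_neg at h'
  choose d hd using h'
  have hp0 : p ≠ 0 := hp.ne_zero
  have hpc : GaussianInt.toComplex p ≠ 0 := by
    rwa [Ne, GaussianInt.toComplex_eq_zero]
  refine h.2 (GaussianInt.toComplex p)⁻¹ (inv_ne_zero hpc) ?_ ?_
  · rw [norm_inv]
    have := one_lt_norm_toComplex hp0 hp.not_unit
    rw [inv_lt_one_iff₀]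
    right; exact this
  · refine ⟨d, ?_⟩
    rw [ha, Finset.smul_sum]
    refine Finset.sum_congr rfl fun x _ => ?_
    rw [smul_smul]
    congr 1
    rw [hd x, map_mul]
    field_simp

lemma key_minimal {n m : ℕ} {φ : EuclideanSpace ℂ (Fin n → Fin 2)}
    {ψ : EuclideanSpace ℂ (Fin m → Fin 2)}
    (hφ : PropMinimal n φ) (hψ : PropMinimal m ψ) :
    PropMinimal (n + m) (bwTprod φ ψ) := by
  classical
  letI : GCDMonoid GaussianInt := EuclideanDomain.gcdMonoid _
  obtain ⟨a, ha⟩ := hφ.1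
  obtain ⟨b, hb⟩ := hψ.1
  refine ⟨memBW_tprod hφ.1 hψ.1, ?_⟩
  rintro c hc hc1 ⟨A, hA⟩
  have hdφ : ∀ x, dualL n x φ = GaussianInt.toComplex (a x) := fun x => by
    rw [ha]; exact dualL_sum_gen n (fun x' => GaussianInt.toComplex (a x')) x
  have hdψ : ∀ y, dualL m y ψ = GaussianInt.toComplex (b y) := fun y => by
    rw [hb]; exact dualL_sum_gen m (fun y' => GaussianInt.toComplex (b y')) y
  have hprod : ∀ x y, c * GaussianInt.toComplex (a x) * GaussianInt.toComplex (b y) =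
      GaussianInt.toComplex (A (Fin.append x y)) := by
    intro x y
    have h := congrArg (dualL (n + m) (Fin.append x y)) hA
    rw [map_smul, dualL_tprod, hdφ, hdψ,
      dualL_sum_gen (n + m) (fun z => GaussianInt.toComplex (A z)) (Fin.append x y),
      smul_eq_mul] at h
    rw [← h]; ring
  obtain ⟨x0, hx0⟩ := exists_coeff_ne_zero hφ ha
  obtain ⟨y0, hy0⟩ := exists_coeff_ne_zero hψ hb
  set q : GaussianInt := a x0 * b y0 with hq_def
  have hq : q ≠ 0 := mul_ne_zero hx0 hy0
  have hqc : GaussianInt.toComplex q ≠ 0 := by rwa [Ne, GaussianInt.toComplex_eq_zero]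
  set g0 : GaussianInt := A (Fin.append x0 y0) with hg0_def
  have hcg0 : GaussianInt.toComplex g0 = c * GaussianInt.toComplex q := by
    rw [← hprod x0 y0, hq_def, map_mul]; ring
  have hg0 : g0 ≠ 0 := by
    intro h0
    rw [h0] at hcg0
    simp only [GaussianInt.toComplex_zero] at hcg0
    exact hc (by
      have := hcg0.symm
      rcases mul_eq_zero.mp this with h | h
      · exact h
      · exact absurd h hqc)
  have hdvd : ∀ x y, q ∣ g0 * (a x * b y) := by
    intro x y
    refine ⟨A (Fin.append x y), ?_⟩
    rw [← GaussianInt.toComplex_inj]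
    simp only [map_mul]
    rw [← hprod x y, hcg0]
    ring
  set dd : GaussianInt := GCDMonoid.gcd g0 q with hdd_def
  have hdd : dd ≠ 0 := gcd_ne_zero_of_right hq
  set g1 : GaussianInt := g0 / dd with hg1_def
  set q1 : GaussianInt := q / dd with hq1_def
  have hco : IsCoprime g1 q1 := isCoprime_div_gcd_div_gcd hq
  have hq1 : q1 ≠ 0 := right_div_gcd_ne_zero hq
  have hdq : dd * q1 = q := EuclideanDomain.mul_div_cancel' hdd (gcd_dvd_right g0 q)
  have hdg : dd * g1 = g0 := EuclideanDomain.mul_div_cancel' hdd (gcd_dvd_left g0 q)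
  have hq1u : ¬ IsUnit q1 := by
    intro hu
    have hqd : q ∣ g0 := by
      rw [← hdq, ← hdg]
      exact mul_dvd_mul_left dd (hu.dvd)
    obtain ⟨w, hw⟩ := hqd
    have hwc : c = GaussianInt.toComplex w := by
      have h' : GaussianInt.toComplex q * GaussianInt.toComplex w
          = GaussianInt.toComplex q * c := by
        rw [← map_mul, ← hw, hcg0]; ring
      exact (mul_left_cancel₀ hqc h').symm
    have hwne : w ≠ 0 := by
      intro h0
      rw [h0, GaussianInt.toComplex_zero] at hwc
      exact hc hwc
    have := one_le_norm_toComplex hwne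
    rw [← hwc] at this
    linarith
  obtain ⟨p, hpi, hpd⟩ := WfDvdMonoid.exists_irreducible_factor hq1u hq1
  have hp : Prime p := UniqueFactorizationMonoid.irreducible_iff_prime.mp hpi
  have hq1t : ∀ x y, q1 ∣ a x * b y := by
    intro x y
    have h1 : dd * q1 ∣ dd * (g1 * (a x * b y)) := by
      rw [hdq, ← mul_assoc, hdg]
      exact hdvd x y
    have h2 : q1 ∣ g1 * (a x * b y) := (mul_dvd_mul_iff_left hdd).mp h1
    exact hco.symm.dvd_of_dvd_mul_left h2
  obtain ⟨y1, hy1⟩ := no_common_prime hψ hb hp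
  have hax : ∀ x, p ∣ a x := fun x =>
    ((hp.dvd_mul.mp (hpd.trans (hq1t x y1)))).resolve_right hy1
  obtain ⟨x1, hx1⟩ := no_common_prime hφ ha hp
  exact hx1 (hax x1)

lemma bwNorm_eq {n : ℕ} {φ : EuclideanSpace ℂ (Fin n → Fin 2)} (h : PropMinimal n φ) :
    bwNorm n φ = ‖φ‖^2 := by
  have hmem : (‖φ‖^2) ∈ {r : ℝ | ∃ c : ℂ, c ≠ 0 ∧ memBW n (c • φ) ∧ r = ‖c • φ‖ ^ 2} :=
    ⟨1, one_ne_zero, by simpa using h.1, by simp⟩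
  refine le_antisymm (csInf_le ⟨0, ?_⟩ hmem) (le_csInf ⟨_, hmem⟩ ?_)
  · rintro r ⟨c, hc, hm, rfl⟩
    positivity
  · rintro r ⟨c, hc0, hm, rfl⟩
    have h1 : 1 ≤ ‖c‖ := by
      by_contra h'
      push_neg at h'
      exact h.2 c hc0 h' hm
    rw [norm_smul, mul_pow]
    have h2 : 1 ≤ ‖c‖^2 := by nlinarith
    nlinarith [sq_nonneg ‖φ‖]

lemma tprod_normsq {n m : ℕ} (φ : EuclideanSpace ℂ (Fin n → Fin 2))
    (ψ : EuclideanSpace ℂ (Fin m → Fin 2)) :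
    ‖bwTprod φ ψ‖^2 = ‖φ‖^2 * ‖ψ‖^2 := by
  have e : ∀ {k : ℕ} (v : EuclideanSpace ℂ (Fin k → Fin 2)), ‖v‖^2 = ∑ z, ‖v z‖^2 := by
    intro k v
    rw [EuclideanSpace.norm_eq, Real.sq_sqrt (Finset.sum_nonneg fun z _ => by positivity)]
  rw [e (bwTprod φ ψ), e φ, e ψ,
    ← Equiv.sum_comp (pairEquiv n m (Fin 2)) (fun z => ‖bwTprod φ ψ z‖^2),
    Fintype.sum_prod_type, Finset.sum_mul_sum]
  refine Finset.sum_congr rfl fun u _ => Finset.sum_congr rfl fun v _ => ?_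
  rw [show (pairEquiv n m (Fin 2)) (u, v) = Fin.append u v from rfl, tprod_append,
    norm_mul, mul_pow]

theorem stmt_13 (n m : ℕ) (φ : EuclideanSpace ℂ (Fin n → Fin 2))
    (ψ : EuclideanSpace ℂ (Fin m → Fin 2))
    (hφ : PropMinimal n φ) (hψ : PropMinimal m ψ) :
    PropMinimal (n + m) (bwTprod φ ψ) ∧
      bwNorm (n + m) (bwTprod φ ψ) = bwNorm n φ * bwNorm m ψ := by
  have hT : PropMinimal (n + m) (bwTprod φ ψ) := key_minimal hφ hψ
  refine ⟨hT, ?_⟩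
  rw [bwNorm_eq hT, bwNorm_eq hφ, bwNorm_eq hψ, tprod_normsq]
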